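/- Let A(t) = (a_{kj}(t)) be a K×K real matrix-valued function, continuous in t ∈ ℝ, with A(t+T) = A(t), which is cooperative and strongly irreducible. Suppose (λ, φ) and (λ′, φ′) are two pairs consisting of a real number and a continuously differentiable T-periodic function ℝ → ℝ^K with all components strictly positive and |φ(0)| = |φ′(0)| = 1, such that −φ′(t) + A(t)φ(t) = λφ(t) and −(φ′)′(t) + A(t)φ′(t) = λ′φ′(t) for all t. Then λ = λ′ and φ(t) = φ′(t) for all t ∈ ℝ. -/

import Mathlib

open Matrix

private theorem stmt1_aux (K : ℕ) (T : ℝ) (hT : 0 < T)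
    (A : ℝ → Matrix (Fin K) (Fin K) ℝ)
    (hAcont : ∀ k j, Continuous fun t => A t k j)
    (hAper : ∀ t, A (t + T) = A t)
    (hAcoop : ∀ t, ∀ k j : Fin K, k ≠ j → 0 ≤ A t k j)
    (hAirr : ∀ S : Set (Fin K), S.Nonempty → Sᶜ.Nonempty → ∀ t,
      ∃ k ∈ S, ∃ j ∈ Sᶜ, A t k j ≠ 0)
    (lam lam' : ℝ) (φ φ' : ℝ → Fin K → ℝ)
    (hφC : ContDiff ℝ 1 φ) (hφ'C : ContDiff ℝ 1 φ')
    (hφper : ∀ t, φ (t + T) = φ t) (hφ'per : ∀ t, φ' (t + T) = φ' t)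
    (hφpos : ∀ t k, 0 < φ t k) (hφ'pos : ∀ t k, 0 < φ' t k)
    (hφnorm : Real.sqrt (∑ k, (φ 0 k) ^ 2) = 1)
    (hφ'norm : Real.sqrt (∑ k, (φ' 0 k) ^ 2) = 1)
    (hφeq : ∀ t, -deriv φ t + (A t).mulVec (φ t) = lam • φ t)
    (hφ'eq : ∀ t, -deriv φ' t + (A t).mulVec (φ' t) = lam' • φ' t)
    (hK : 0 < K) (hle : lam' ≤ lam) :
    lam = lam' ∧ ∀ t, φ t = φ' t := by
  have hφd : Differentiable ℝ φ := hφC.differentiable one_ne_zero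
  have hφ'd : Differentiable ℝ φ' := hφ'C.differentiable one_ne_zero
  have hder : ∀ k (t : ℝ), HasDerivAt (fun t => φ t k) (deriv φ t k) t :=
    fun k t => hasDerivAt_pi.1 (hφd t).hasDerivAt k
  have hder' : ∀ k (t : ℝ), HasDerivAt (fun t => φ' t k) (deriv φ' t k) t :=
    fun k t => hasDerivAt_pi.1 (hφ'd t).hasDerivAt k
  -- component equations
  have heq : ∀ (t : ℝ) k, deriv φ t k = (∑ j, A t k j * φ t j) - lam * φ t k := by
    intro t k
    have h := congrFun (hφeq t) k
    simp only [Pi.add_apply, Pi.neg_apply, Matrix.mulVec, dotProduct,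
      Pi.smul_apply, smul_eq_mul] at h
    linarith
  have heq' : ∀ (t : ℝ) k, deriv φ' t k = (∑ j, A t k j * φ' t j) - lam' * φ' t k := by
    intro t k
    have h := congrFun (hφ'eq t) k
    simp only [Pi.add_apply, Pi.neg_apply, Matrix.mulVec, dotProduct,
      Pi.smul_apply, smul_eq_mul] at h
    linarith
  -- the maximum of the ratio
  have hrcont : ∀ k : Fin K, Continuous fun t => φ t k / φ' t k := fun k =>
    ((continuous_apply k).comp hφC.continuous).div
      ((continuous_apply k).comp hφ'C.continuous) fun t => (hφ'pos t k).ne'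
  have hmaxex : ∀ k : Fin K, ∃ t₁ ∈ Set.Icc (0:ℝ) T, ∀ t ∈ Set.Icc (0:ℝ) T,
      φ t k / φ' t k ≤ φ t₁ k / φ' t₁ k := by
    intro k
    obtain ⟨t₁, ht₁, hmax⟩ := isCompact_Icc.exists_isMaxOn
      ⟨0, Set.left_mem_Icc.2 hT.le⟩ (hrcont k).continuousOn
    exact ⟨t₁, ht₁, fun t ht => hmax ht⟩
  choose tm htm hmaxm using hmaxex
  obtain ⟨k₀, -, hk₀⟩ := Finset.exists_max_image Finset.univ
    (fun k => φ (tm k) k / φ' (tm k) k) ⟨⟨0, hK⟩, Finset.mem_univ _⟩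
  set t₀ := tm k₀ with ht₀
  set s := φ t₀ k₀ / φ' t₀ k₀ with hs
  have hspos : 0 < s := div_pos (hφpos _ _) (hφ'pos _ _)
  have hbound : ∀ (t : ℝ) k, φ t k ≤ s * φ' t k := by
    intro t k
    have hper : Function.Periodic (fun t => φ t k / φ' t k) T := fun x => by
      simp only [hφper, hφ'per]
    obtain ⟨y, hy, hxy⟩ := hper.exists_mem_Ico₀ hT t
    have h1 : φ y k / φ' y k ≤ s :=
      le_trans (hmaxm k y (Set.Ico_subset_Icc_self hy)) (hk₀ k (Finset.mem_univ k))
    have h2 : φ t k / φ' t k ≤ s := hxy.trans_le h1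
    exact (div_le_iff₀ (hφ'pos t k)).1 h2
  set w : ℝ → Fin K → ℝ := fun t k => s * φ' t k - φ t k with hw
  have hwnn : ∀ (t : ℝ) k, 0 ≤ w t k := fun t k => by
    have := hbound t k; simp only [hw]; linarith
  have hwt₀ : w t₀ k₀ = 0 := by
    have h1 : s * φ' t₀ k₀ = φ t₀ k₀ := div_mul_cancel₀ (φ t₀ k₀) (hφ'pos t₀ k₀).ne'
    simp only [hw]; linarith
  have hwder : ∀ k (t : ℝ), HasDerivAt (fun t => w t k)
      (s * deriv φ' t k - deriv φ t k) t :=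
    fun k t => ((hder' k t).const_mul s).sub (hder k t)
  -- the key algebraic identity
  have hsum : ∀ k (t : ℝ), s * deriv φ' t k - deriv φ t k
      = (∑ j, A t k j * w t j) + (lam - lam') * φ t k - lam' * w t k := by
    intro k t
    have e1 : ∑ j, A t k j * w t j
        = s * (∑ j, A t k j * φ' t j) - ∑ j, A t k j * φ t j := by
      rw [Finset.mul_sum, ← Finset.sum_sub_distrib]
      exact Finset.sum_congr rfl fun j _ => by simp only [hw]; ring
    rw [heq t k, heq' t k, e1]
    simp only [hw]; ring
  -- differential inequality
  have hineq : ∀ k (t : ℝ), (A t k k - lam') * w t k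
      ≤ s * deriv φ' t k - deriv φ t k := by
    intro k t
    have hrest : 0 ≤ ∑ j ∈ Finset.univ.erase k, A t k j * w t j :=
      Finset.sum_nonneg fun j hj =>
        mul_nonneg (hAcoop t k j (Finset.ne_of_mem_erase hj).symm) (hwnn t j)
    have hsplit : (∑ j, A t k j * w t j)
        = A t k k * w t k + ∑ j ∈ Finset.univ.erase k, A t k j * w t j :=
      (Finset.add_sum_erase _ _ (Finset.mem_univ k)).symm
    have hlamphi : 0 ≤ (lam - lam') * φ t k :=
      mul_nonneg (sub_nonneg.2 hle) (hφpos t k).le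
    rw [hsum k t, hsplit]
    have : (A t k k - lam') * w t k = A t k k * w t k - lam' * w t k := by ring
    linarith
  -- lower bound on diagonal entries
  have hAbnd : ∀ k : Fin K, ∃ M : ℝ, ∀ t : ℝ, 0 ≤ A t k k - lam' + M := by
    intro k
    obtain ⟨t₁, -, hmin⟩ := isCompact_Icc.exists_isMinOn
      ⟨0, Set.left_mem_Icc.2 hT.le⟩ (hAcont k k).continuousOn
    refine ⟨lam' - A t₁ k k, fun t => ?_⟩
    have hper : Function.Periodic (fun t => A t k k) T := fun x => by
      show A (x + T) k k = A x k k
      rw [hAper]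
    obtain ⟨y, hy, hxy⟩ := hper.exists_mem_Ico₀ hT t
    have h3 : A t₁ k k ≤ A y k k := hmin (Set.Ico_subset_Icc_self hy)
    have h4 : A t k k = A y k k := hxy
    linarith
  -- zero propagation
  have hprop : ∀ k (t₁ : ℝ), w t₁ k = 0 → ∀ t, w t k = 0 := by
    intro k t₁ h0 t
    obtain ⟨M, hM⟩ := hAbnd k
    set h : ℝ → ℝ := fun t => w t k * Real.exp (M * t) with hh
    have hhder : ∀ x : ℝ, HasDerivAt h
        ((s * deriv φ' x k - deriv φ x k) * Real.exp (M * x)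
          + w x k * (Real.exp (M * x) * M)) x := by
      intro x
      have hexp : HasDerivAt (fun t => Real.exp (M * t)) (Real.exp (M * x) * M) x := by
        simpa using ((hasDerivAt_id x).const_mul M).exp
      exact (hwder k x).mul hexp
    have hmono : Monotone h := by
      apply monotone_of_deriv_nonneg (fun x => (hhder x).differentiableAt)
      intro x
      rw [(hhder x).deriv]
      have h1 := hineq k x
      have h2 := hM x
      have h3 := hwnn x k
      have e := Real.exp_pos (M * x)
      have key : 0 ≤ (A x k k - lam' + M) * (w x k * Real.exp (M * x)) :=
        mul_nonneg h2 (mul_nonneg h3 e.le)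
      have key2 : (A x k k - lam') * w x k * Real.exp (M * x)
          ≤ (s * deriv φ' x k - deriv φ x k) * Real.exp (M * x) :=
        mul_le_mul_of_nonneg_right h1 e.le
      nlinarith [key, key2]
    have hzero_le : ∀ τ : ℝ, τ ≤ t₁ → w τ k = 0 := by
      intro τ hτ
      have h1 : h τ ≤ h t₁ := hmono hτ
      have h2 : h t₁ = 0 := by simp only [hh, h0, zero_mul]
      have h3 : 0 ≤ h τ := mul_nonneg (hwnn τ k) (Real.exp_pos _).le
      have h4 : h τ = 0 := le_antisymm (h2 ▸ h1) h3
      exact (mul_eq_zero.1 h4).resolve_right (Real.exp_ne_zero _)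
    have hwper : Function.Periodic (fun t => w t k) T := fun x => by
      simp only [hw, hφper, hφ'per]
    obtain ⟨n, hn⟩ := exists_nat_ge ((t - t₁) / T)
    have hle' : t - n * T ≤ t₁ := by
      have h5 : t - t₁ ≤ n * T := by
        rw [div_le_iff₀ hT] at hn; linarith
      linarith
    have h6 := hzero_le (t - n * T) hle'
    have h7 : w (t - n * T) k = w t k := hwper.sub_nat_mul_eq n
    rw [← h7]; exact h6
  -- consequences at identically-zero components
  have hzeq : ∀ k, (∀ t : ℝ, w t k = 0) → ∀ t : ℝ,
      (∀ j, A t k j * w t j = 0) ∧ (lam - lam') * φ t k = 0 := by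
    intro k hk t
    have hdz : s * deriv φ' t k - deriv φ t k = 0 := by
      have h1 : (fun t => w t k) = fun _ => (0 : ℝ) := funext hk
      have h2 := hwder k t
      rw [h1] at h2
      exact h2.unique (hasDerivAt_const t 0)
    have h0 : (∑ j, A t k j * w t j) + (lam - lam') * φ t k = 0 := by
      have := hsum k t; rw [hdz, hk t] at this; linarith
    have hterm : ∀ j ∈ Finset.univ, 0 ≤ A t k j * w t j := by
      intro j _
      rcases eq_or_ne k j with rfl | hne
      · rw [hk t, mul_zero]
      · exact mul_nonneg (hAcoop t k j hne) (hwnn t j)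
    have hsnn : 0 ≤ ∑ j, A t k j * w t j := Finset.sum_nonneg hterm
    have hlnn : 0 ≤ (lam - lam') * φ t k :=
      mul_nonneg (sub_nonneg.2 hle) (hφpos t k).le
    have hs0 : (∑ j, A t k j * w t j) = 0 := by linarith
    refine ⟨fun j => (Finset.sum_eq_zero_iff_of_nonneg hterm).1 hs0 j (Finset.mem_univ j),
      by linarith⟩
  have hk₀all : ∀ t : ℝ, w t k₀ = 0 := hprop k₀ t₀ hwt₀
  have hlam : lam = lam' := by
    have h1 := (hzeq k₀ hk₀all 0).2
    have hp := hφpos 0 k₀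
    rcases mul_eq_zero.1 h1 with h | h
    · linarith
    · exact absurd h hp.ne'
  have hZ : ∀ k (t : ℝ), w t k = 0 := by
    by_contra hc
    push_neg at hc
    obtain ⟨k₁, t₁, hk₁⟩ := hc
    set Z : Set (Fin K) := {k | ∀ t : ℝ, w t k = 0} with hZdef
    have hk₁Z : k₁ ∈ Zᶜ := fun h => hk₁ (h t₁)
    obtain ⟨k, hkZ, j, hjZ, hAkj⟩ := hAirr Z ⟨k₀, hk₀all⟩ ⟨k₁, hk₁Z⟩ t₀
    have h1 := (hzeq k hkZ t₀).1 j
    have hwj : 0 < w t₀ j := by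
      rcases (hwnn t₀ j).lt_or_eq with h | h
      · exact h
      · exact absurd (hprop j t₀ h.symm) hjZ
    exact hAkj ((mul_eq_zero.1 h1).resolve_right hwj.ne')
  have hφs : ∀ (t : ℝ) k, φ t k = s * φ' t k := fun t k => by
    have := hZ k t; simp only [hw] at this; linarith
  have hs1 : s = 1 := by
    have h1 : ∑ k, (φ 0 k) ^ 2 = s ^ 2 * ∑ k, (φ' 0 k) ^ 2 := by
      rw [Finset.mul_sum]
      exact Finset.sum_congr rfl fun k _ => by rw [hφs 0 k]; ring
    have h2 : Real.sqrt (∑ k, (φ 0 k) ^ 2)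
        = s * Real.sqrt (∑ k, (φ' 0 k) ^ 2) := by
      rw [h1, Real.sqrt_mul (sq_nonneg s), Real.sqrt_sq hspos.le]
    rw [hφnorm, hφ'norm, mul_one] at h2
    exact h2.symm
  exact ⟨hlam, fun t => funext fun k => by rw [hφs t k, hs1, one_mul]⟩

/-- Uniqueness of the principal eigenpair for a continuous,
`T`-periodic, cooperative, strongly irreducible matrix function: two eigenpairs
with strictly positive `C¹` `T`-periodic eigenfunctions normalized by
`|φ(0)| = 1` (Euclidean norm) coincide. -/
theorem stmt1 (K : ℕ) (hK : 2 ≤ K) (T : ℝ) (hT : 0 < T)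
    (A : ℝ → Matrix (Fin K) (Fin K) ℝ)
    (hAcont : ∀ k j, Continuous fun t => A t k j)
    (hAper : ∀ t, A (t + T) = A t)
    (hAcoop : ∀ t, ∀ k j : Fin K, k ≠ j → 0 ≤ A t k j)
    (hAirr : ∀ S : Set (Fin K), S.Nonempty → Sᶜ.Nonempty → ∀ t,
      ∃ k ∈ S, ∃ j ∈ Sᶜ, A t k j ≠ 0)
    (lam lam' : ℝ) (φ φ' : ℝ → Fin K → ℝ)
    (hφC : ContDiff ℝ 1 φ) (hφ'C : ContDiff ℝ 1 φ')
    (hφper : ∀ t, φ (t + T) = φ t) (hφ'per : ∀ t, φ' (t + T) = φ' t)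
    (hφpos : ∀ t k, 0 < φ t k) (hφ'pos : ∀ t k, 0 < φ' t k)
    (hφnorm : Real.sqrt (∑ k, (φ 0 k) ^ 2) = 1)
    (hφ'norm : Real.sqrt (∑ k, (φ' 0 k) ^ 2) = 1)
    (hφeq : ∀ t, -deriv φ t + (A t).mulVec (φ t) = lam • φ t)
    (hφ'eq : ∀ t, -deriv φ' t + (A t).mulVec (φ' t) = lam' • φ' t) :
    lam = lam' ∧ ∀ t, φ t = φ' t := by
  have hK0 : 0 < K := by omega
  rcases le_total lam' lam with hle | hle
  · exact stmt1_aux K T hT A hAcont hAper hAcoop hAirr lam lam' φ φ' hφC hφ'C hφper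
      hφ'per hφpos hφ'pos hφnorm hφ'norm hφeq hφ'eq hK0 hle
  · obtain ⟨h1, h2⟩ := stmt1_aux K T hT A hAcont hAper hAcoop hAirr lam' lam φ' φ
      hφ'C hφC hφ'per hφper hφ'pos hφpos hφ'norm hφnorm hφ'eq hφeq hK0 hle
    exact ⟨h1.symm, fun t => (h2 t).symm⟩
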